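/- Let λ ∈ ℝ and let Z̃ = (X̃; Ũ) be a conjoined basis of (S_λ) with X̃ₖ invertible for every k ∈ ℕ; let Λ, X̂, Û, Ẑ be as in the dominant-solution construction (Λₖ = Σ_{j=0}^{k−1}(−X̃_j^{−1} ℬ_j (X̃_{j+1}*)^{−1}), X̂ = X̃Λ, Û = ŨΛ + (X̃*)^{−1}). Let m ∈ ℕ be such that Λ_m (equivalently X̂_m) is invertible, define Z^{(m)} := Z̃ − Ẑ X̂_m^{−1} X̃_m, fix j ∈ {1,…,n}, and define z : ℕ → ℂ^{2n} by zₖ = Z^{(m)}ₖ e_j for k ≤ m and zₖ = 0 for k > m, and f : ℕ → ℂ^{2n} by fₖ = 0 for k ≠ m and f_m = ( −𝒲_m^{−1} (X̂_m*)^{−1} e_j ; 0 ). Then Z^{(m)}_m = (0; −(X̂_m*)^{−1}) and 𝒥(zₖ − 𝒮ₖ z_{k+1}) = Ψₖ (λ zₖ + fₖ) holds for every k ∈ ℕ. -/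

import Mathlib

open Matrix Filter
open scoped ComplexOrder

noncomputable def Jmat (n : ℕ) : Matrix (Fin n ⊕ Fin n) (Fin n ⊕ Fin n) ℂ :=
  Matrix.fromBlocks 0 1 (-1) 0

noncomputable def PsiMat {n : ℕ} (W : ℕ → Matrix (Fin n) (Fin n) ℂ) (k : ℕ) :
    Matrix (Fin n ⊕ Fin n) (Fin n ⊕ Fin n) ℂ :=
  Matrix.fromBlocks (W k) 0 0 0

noncomputable def Vmat {n : ℕ} (S : ℕ → Matrix (Fin n ⊕ Fin n) (Fin n ⊕ Fin n) ℂ)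
    (W : ℕ → Matrix (Fin n) (Fin n) ℂ) (k : ℕ) :
    Matrix (Fin n ⊕ Fin n) (Fin n ⊕ Fin n) ℂ :=
  -(Jmat n * PsiMat W k * S k)

/-- `Z` is a conjoined basis of system `(S_ν)`: a `2n×n` matrix solution with
`rank Zₖ = n` and `Zₖ* 𝒥 Zₖ = 0` for all `k`. -/
def IsConjoinedBasis {n : ℕ} (S : ℕ → Matrix (Fin n ⊕ Fin n) (Fin n ⊕ Fin n) ℂ)
    (W : ℕ → Matrix (Fin n) (Fin n) ℂ) (nu : ℝ)
    (Z : ℕ → Matrix (Fin n ⊕ Fin n) (Fin n) ℂ) : Prop :=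
  (∀ k, Z k = (S k + (nu : ℂ) • Vmat S W k) * Z (k + 1)) ∧
    ∀ k, (Z k).rank = n ∧ (Z k)ᴴ * Jmat n * Z k = 0

/-- `Z̃ = (X̃; Ũ)` is a recessive solution of `(S_ν)`: a conjoined basis such that for all
sufficiently large `k` the matrix `X̃ₖ` is invertible with `−X̃ₖ⁻¹ ℬₖ (X̃_{k+1}*)⁻¹ ≥ 0`,
and for every conjoined basis `Z = (X; U)` normalized with `Z̃` (i.e. `Zₖ* 𝒥 Z̃ₖ = I`),
the matrix `Xₖ` is invertible for all large `k` and `Xₖ⁻¹ X̃ₖ → 0` as `k → ∞`. -/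
def IsRecessive {n : ℕ} (S : ℕ → Matrix (Fin n ⊕ Fin n) (Fin n ⊕ Fin n) ℂ)
    (W B : ℕ → Matrix (Fin n) (Fin n) ℂ) (nu : ℝ)
    (Xt Ut : ℕ → Matrix (Fin n) (Fin n) ℂ) : Prop :=
  IsConjoinedBasis S W nu (fun k => Matrix.fromRows (Xt k) (Ut k)) ∧
    (∃ k₀ : ℕ, ∀ k, k₀ ≤ k →
      IsUnit (Xt k) ∧ (-((Xt k)⁻¹ * B k * ((Xt (k + 1))ᴴ)⁻¹)).PosSemidef) ∧
    ∀ X U : ℕ → Matrix (Fin n) (Fin n) ℂ,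
      IsConjoinedBasis S W nu (fun k => Matrix.fromRows (X k) (U k)) →
      (∀ k, (Matrix.fromRows (X k) (U k))ᴴ * Jmat n * Matrix.fromRows (Xt k) (Ut k) = 1) →
      (∃ k₁ : ℕ, ∀ k, k₁ ≤ k → IsUnit (X k)) ∧
        Filter.Tendsto (fun k => (X k)⁻¹ * Xt k) Filter.atTop (nhds 0)

/-- The system is eventually controllable: there is `N` such that on any finite subinterval
`{K,…,M}` of `[N,∞)` the only `u` with `0 = ℬₖ u_{k+1}` and `uₖ = 𝒟ₖ u_{k+1}` for all
`k ∈ {K,…,M−1}` is the trivial one. -/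
def EventuallyControllable {n : ℕ} (B D : ℕ → Matrix (Fin n) (Fin n) ℂ) : Prop :=
  ∃ N : ℕ, ∀ K M : ℕ, N ≤ K → K < M →
    ∀ u : ℕ → Fin n → ℂ,
      (∀ k, K ≤ k → k < M → B k *ᵥ u (k + 1) = 0 ∧ u k = D k *ᵥ u (k + 1)) →
      ∀ k, K ≤ k → k ≤ M → u k = 0

/-- The strong Atkinson (definiteness) condition: there are `λ₀ ∈ ℂ` and `a ≤ b` in `ℕ`
such that every solution `z` of `(S_{λ₀})` with `Σ_{k=a}^{b} zₖ*Ψₖzₖ = 0` vanishes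
identically. -/
def StrongAtkinson {n : ℕ} (S : ℕ → Matrix (Fin n ⊕ Fin n) (Fin n ⊕ Fin n) ℂ)
    (W : ℕ → Matrix (Fin n) (Fin n) ℂ) : Prop :=
  ∃ (lam0 : ℂ) (a b : ℕ), a ≤ b ∧
    ∀ z : ℕ → (Fin n ⊕ Fin n) → ℂ,
      (∀ k, z k = (S k + lam0 • Vmat S W k) *ᵥ z (k + 1)) →
      (∑ k ∈ Finset.Icc a b, star (z k) ⬝ᵥ (PsiMat W k *ᵥ z k)) = 0 →
      ∀ k, z k = 0

/-- `Λₖ = Σ_{j=0}^{k−1} (−X̃_j⁻¹ ℬ_j (X̃_{j+1}*)⁻¹)` (so `Λ₀ = 0`). -/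
noncomputable def LamMat {n : ℕ} (B Xt : ℕ → Matrix (Fin n) (Fin n) ℂ) (k : ℕ) :
    Matrix (Fin n) (Fin n) ℂ :=
  ∑ j ∈ Finset.range k, -((Xt j)⁻¹ * B j * ((Xt (j + 1))ᴴ)⁻¹)

/-- `X̂ₖ = X̃ₖ Λₖ`. -/
noncomputable def Xhat {n : ℕ} (B Xt : ℕ → Matrix (Fin n) (Fin n) ℂ) (k : ℕ) :
    Matrix (Fin n) (Fin n) ℂ :=
  Xt k * LamMat B Xt k

/-- `Ûₖ = Ũₖ Λₖ + (X̃ₖ*)⁻¹`. -/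
noncomputable def Uhat {n : ℕ} (B Xt Ut : ℕ → Matrix (Fin n) (Fin n) ℂ) (k : ℕ) :
    Matrix (Fin n) (Fin n) ℂ :=
  Ut k * LamMat B Xt k + ((Xt k)ᴴ)⁻¹

/-- `Z^{(m)} := Z̃ − Ẑ X̂_m⁻¹ X̃_m`. -/
noncomputable def Zsolm {n : ℕ} (B Xt Ut : ℕ → Matrix (Fin n) (Fin n) ℂ) (m k : ℕ) :
    Matrix (Fin n ⊕ Fin n) (Fin n) ℂ :=
  Matrix.fromRows (Xt k) (Ut k) -
    Matrix.fromRows (Xhat B Xt k) (Uhat B Xt Ut k) * ((Xhat B Xt m)⁻¹ * Xt m)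


section S18Aux

open Matrix

variable {n : ℕ}

lemma s18_JJ : Jmat n * Jmat n = -1 := by
  rw [Jmat, Matrix.fromBlocks_multiply, ← Matrix.fromBlocks_one, Matrix.fromBlocks_neg]
  simp

lemma s18_JV (S : ℕ → Matrix (Fin n ⊕ Fin n) (Fin n ⊕ Fin n) ℂ)
    (W : ℕ → Matrix (Fin n) (Fin n) ℂ) (k : ℕ) :
    Jmat n * Vmat S W k = PsiMat W k * S k := by
  rw [Vmat, Matrix.mul_neg, show Jmat n * (Jmat n * PsiMat W k * S k)
      = (Jmat n * Jmat n) * (PsiMat W k * S k) by noncomm_ring, s18_JJ]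
  simp

lemma s18_PsiJPsi (W : ℕ → Matrix (Fin n) (Fin n) ℂ) (k : ℕ) :
    PsiMat W k * Jmat n * PsiMat W k = 0 := by
  rw [PsiMat, Jmat, Matrix.fromBlocks_multiply, Matrix.fromBlocks_multiply]
  simp

lemma s18_PsiV (S : ℕ → Matrix (Fin n ⊕ Fin n) (Fin n ⊕ Fin n) ℂ)
    (W : ℕ → Matrix (Fin n) (Fin n) ℂ) (k : ℕ) :
    PsiMat W k * Vmat S W k = 0 := by
  rw [Vmat, Matrix.mul_neg, show PsiMat W k * (Jmat n * PsiMat W k * S k)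
      = (PsiMat W k * Jmat n * PsiMat W k) * S k by noncomm_ring, s18_PsiJPsi]
  simp

lemma s18_j_mulVec (x : Fin n ⊕ Fin n → ℂ) :
    Jmat n *ᵥ x = Sum.elim (x ∘ Sum.inr) (-(x ∘ Sum.inl)) := by
  rw [Jmat, Matrix.fromBlocks_mulVec]
  have h1 : ∀ w : Fin n → ℂ, (-1 : Matrix (Fin n) (Fin n) ℂ) *ᵥ w = -w := fun w => by
    rw [Matrix.neg_mulVec, Matrix.one_mulVec]
  simp [h1]

lemma s18_psi_mulVec (W : ℕ → Matrix (Fin n) (Fin n) ℂ) (k : ℕ) (x : Fin n ⊕ Fin n → ℂ) :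
    PsiMat W k *ᵥ x = Sum.elim (W k *ᵥ (x ∘ Sum.inl)) 0 := by
  rw [PsiMat, Matrix.fromBlocks_mulVec]
  simp

lemma s18_fromRows_sub (A₁ A₂ B₁ B₂ : Matrix (Fin n) (Fin n) ℂ) :
    Matrix.fromRows A₁ A₂ - Matrix.fromRows B₁ B₂ = Matrix.fromRows (A₁ - B₁) (A₂ - B₂) := by
  ext (i | i) jj <;> simp

/-- Block form of `S + l • V`. -/
lemma s18_slBlocks (S : ℕ → Matrix (Fin n ⊕ Fin n) (Fin n ⊕ Fin n) ℂ)
    (A B C D W : ℕ → Matrix (Fin n) (Fin n) ℂ) (k : ℕ)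
    (hblocks : S k = Matrix.fromBlocks (A k) (B k) (C k) (D k)) (l : ℂ) :
    S k + l • Vmat S W k = Matrix.fromBlocks (A k) (B k)
      (C k + l • (W k * A k)) (D k + l • (W k * B k)) := by
  have hv : Vmat S W k = Matrix.fromBlocks 0 0 (W k * A k) (W k * B k) := by
    rw [Vmat, PsiMat, Jmat, hblocks, Matrix.fromBlocks_multiply, Matrix.fromBlocks_multiply,
      Matrix.fromBlocks_neg]
    congr 1 <;> simp
  rw [hv, hblocks, Matrix.fromBlocks_smul, Matrix.fromBlocks_add]
  congr 1 <;> simp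

/-- Raw block identities of a symplectic matrix. -/
lemma s18_symp_base {A B C D : Matrix (Fin n) (Fin n) ℂ}
    (h : (Matrix.fromBlocks A B C D)ᴴ * Jmat n * Matrix.fromBlocks A B C D = Jmat n) :
    (-(Cᴴ * A) + Aᴴ * C = 0) ∧ (-(Cᴴ * B) + Aᴴ * D = 1) ∧
      (-(Dᴴ * A) + Bᴴ * C = -1) ∧ (-(Dᴴ * B) + Bᴴ * D = 0) := by
  rw [Matrix.fromBlocks_conjTranspose, Jmat, Matrix.fromBlocks_multiply,
    Matrix.fromBlocks_multiply, Matrix.fromBlocks_inj] at h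
  obtain ⟨h1, h2, h3, h4⟩ := h
  simp only [Matrix.mul_zero, Matrix.mul_one, Matrix.mul_neg, Matrix.zero_mul, Matrix.neg_mul,
    Matrix.one_mul, zero_add, add_zero] at h1 h2 h3 h4
  exact ⟨h1, h2, h3, h4⟩

/-- The perturbed matrix is symplectic. -/
lemma s18_symp_lifted {A B C D W : Matrix (Fin n) (Fin n) ℂ} {l : ℂ}
    (h : (Matrix.fromBlocks A B C D)ᴴ * Jmat n * Matrix.fromBlocks A B C D = Jmat n)
    (hW : Wᴴ = W) (hl : (starRingEnd ℂ) l = l) :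
    (Matrix.fromBlocks A B (C + l • (W * A)) (D + l • (W * B)))ᴴ * Jmat n *
      Matrix.fromBlocks A B (C + l • (W * A)) (D + l • (W * B)) = Jmat n := by
  obtain ⟨h1, h2, h3, h4⟩ := s18_symp_base h
  have hl' : star l = l := hl
  rw [Matrix.fromBlocks_conjTranspose, Jmat, Matrix.fromBlocks_multiply,
    Matrix.fromBlocks_multiply, Matrix.fromBlocks_inj]
  simp only [Matrix.mul_zero, Matrix.mul_one, Matrix.mul_neg, Matrix.zero_mul, Matrix.neg_mul,
    Matrix.one_mul, zero_add, add_zero, Matrix.conjTranspose_add, Matrix.conjTranspose_smul,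
    Matrix.conjTranspose_mul, hW, hl, hl', Matrix.add_mul, Matrix.mul_add,
    Matrix.smul_mul, Matrix.mul_smul, Matrix.mul_assoc, neg_add]
  refine ⟨?_, ?_, ?_, ?_⟩
  · rw [← h1]; abel
  · rw [← h2]; abel
  · rw [← h3]; abel
  · rw [← h4]; abel

/-- `U X⁻¹ = (Xᴴ)⁻¹ Uᴴ` for a conjoined pair. -/
lemma s18_ux {X U : Matrix (Fin n) (Fin n) ℂ}
    (hXU : Xᴴ * U = Uᴴ * X) (hd : IsUnit X.det) :
    U * X⁻¹ = (Xᴴ)⁻¹ * Uᴴ := by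
  have hdh : IsUnit Xᴴ.det := by
    rw [Matrix.det_conjTranspose]; exact hd.star
  calc U * X⁻¹ = (Xᴴ)⁻¹ * (Xᴴ * U) * X⁻¹ := by
        rw [← Matrix.mul_assoc, Matrix.nonsing_inv_mul _ hdh, Matrix.one_mul]
    _ = (Xᴴ)⁻¹ * Uᴴ * X * X⁻¹ := by rw [hXU]; noncomm_ring
    _ = (Xᴴ)⁻¹ * Uᴴ := by rw [Matrix.mul_nonsing_inv_cancel_right _ _ hd]

/-- `X⁻¹ B (X₁ᴴ)⁻¹` is Hermitian. -/
lemma s18_qHerm {X X1 U1 A B : Matrix (Fin n) (Fin n) ℂ}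
    (hX : X = A * X1 + B * U1) (hAB : A * Bᴴ = B * Aᴴ)
    (hXU : X1ᴴ * U1 = U1ᴴ * X1)
    (hdX : IsUnit X.det) (hdX1 : IsUnit X1.det) :
    (X⁻¹ * B * (X1ᴴ)⁻¹)ᴴ = X⁻¹ * B * (X1ᴴ)⁻¹ := by
  have hdXh : IsUnit Xᴴ.det := by rw [Matrix.det_conjTranspose]; exact hdX.star
  have hdX1h : IsUnit X1ᴴ.det := by rw [Matrix.det_conjTranspose]; exact hdX1.star
  have hUX1 : U1 * X1⁻¹ = (X1ᴴ)⁻¹ * U1ᴴ := s18_ux hXU hdX1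
  have key : B * (X1ᴴ)⁻¹ * Xᴴ = X * (X1⁻¹ * Bᴴ) := by
    have hXh : Xᴴ = X1ᴴ * Aᴴ + U1ᴴ * Bᴴ := by
      rw [hX, Matrix.conjTranspose_add, Matrix.conjTranspose_mul, Matrix.conjTranspose_mul]
    rw [hXh, hX]
    rw [Matrix.mul_add, Matrix.add_mul]
    rw [show B * (X1ᴴ)⁻¹ * (X1ᴴ * Aᴴ) = B * ((X1ᴴ)⁻¹ * (X1ᴴ * Aᴴ)) from by noncomm_ring,
      Matrix.nonsing_inv_mul_cancel_left _ _ hdX1h]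
    rw [show A * X1 * (X1⁻¹ * Bᴴ) = A * (X1 * X1⁻¹) * Bᴴ from by noncomm_ring,
      Matrix.mul_nonsing_inv _ hdX1, Matrix.mul_one]
    rw [show B * U1 * (X1⁻¹ * Bᴴ) = B * ((U1 * X1⁻¹) * Bᴴ) from by noncomm_ring, hUX1]
    rw [show B * (X1ᴴ)⁻¹ * (U1ᴴ * Bᴴ) = B * ((X1ᴴ)⁻¹ * U1ᴴ * Bᴴ) from by noncomm_ring]
    rw [hAB]
  have : (X⁻¹ * B * (X1ᴴ)⁻¹)ᴴ = X1⁻¹ * Bᴴ * (Xᴴ)⁻¹ := by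
    rw [Matrix.conjTranspose_mul, Matrix.conjTranspose_mul, Matrix.conjTranspose_nonsing_inv,
      Matrix.conjTranspose_nonsing_inv, Matrix.conjTranspose_conjTranspose, Matrix.mul_assoc]
  rw [this]
  calc X1⁻¹ * Bᴴ * (Xᴴ)⁻¹ = X⁻¹ * (X * (X1⁻¹ * Bᴴ)) * (Xᴴ)⁻¹ := by
        rw [Matrix.nonsing_inv_mul_cancel_left _ _ hdX, Matrix.mul_assoc]
    _ = X⁻¹ * (B * (X1ᴴ)⁻¹ * Xᴴ) * (Xᴴ)⁻¹ := by rw [key]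
    _ = X⁻¹ * B * (X1ᴴ)⁻¹ := by
        simp only [Matrix.mul_assoc]
        rw [Matrix.mul_nonsing_inv _ hdXh, Matrix.mul_one]

end S18Aux

/-- with `Z^{(m)} = Z̃ − Ẑ X̂_m⁻¹ X̃_m`, `zₖ = Z^{(m)}ₖ e_j` for `k ≤ m` and
`zₖ = 0` for `k > m`, `f_m = (−𝒲_m⁻¹ (X̂_m*)⁻¹ e_j ; 0)` and `fₖ = 0` otherwise, one has
`Z^{(m)}_m = (0; −(X̂_m*)⁻¹)` and `𝒥(zₖ − 𝒮ₖ z_{k+1}) = Ψₖ(λ zₖ + fₖ)` for every `k`. -/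

theorem statement18 {n : ℕ} (hn : 1 ≤ n)
    (S : ℕ → Matrix (Fin n ⊕ Fin n) (Fin n ⊕ Fin n) ℂ)
    (A B C D W : ℕ → Matrix (Fin n) (Fin n) ℂ)
    (hS : ∀ k, (S k)ᴴ * Jmat n * S k = Jmat n)
    (hblocks : ∀ k, S k = Matrix.fromBlocks (A k) (B k) (C k) (D k))
    (hW : ∀ k, (W k).PosDef)
    (lam : ℝ) (Xt Ut : ℕ → Matrix (Fin n) (Fin n) ℂ)
    (hcb : IsConjoinedBasis S W lam (fun k => Matrix.fromRows (Xt k) (Ut k)))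
    (hXinv : ∀ k, IsUnit (Xt k))
    (m : ℕ) (hm : IsUnit (LamMat B Xt m)) (j : Fin n)
    (z f : ℕ → (Fin n ⊕ Fin n) → ℂ)
    (hzdef : ∀ k, z k = if k ≤ m then Zsolm B Xt Ut m k *ᵥ Pi.single j 1 else 0)
    (hfdef : ∀ k, f k = if k = m then
        Sum.elim (-((W m)⁻¹ *ᵥ (((Xhat B Xt m)ᴴ)⁻¹ *ᵥ Pi.single j 1))) 0 else 0) :
    Zsolm B Xt Ut m m = Matrix.fromRows 0 (-(((Xhat B Xt m)ᴴ)⁻¹)) ∧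
      ∀ k, Jmat n *ᵥ (z k - S k *ᵥ z (k + 1)) =
        PsiMat W k *ᵥ ((lam : ℂ) • z k + f k)  := by
  classical
  obtain ⟨hsol, hcb2⟩ := hcb
  have hl : (starRingEnd ℂ) ((lam : ℝ) : ℂ) = ((lam : ℝ) : ℂ) := Complex.conj_ofReal lam
  have hWh : ∀ k, (W k)ᴴ = W k := fun k => (hW k).1
  have hd : ∀ k, IsUnit (Xt k).det := fun k => (Matrix.isUnit_iff_isUnit_det _).1 (hXinv k)
  set l : ℂ := ((lam : ℝ) : ℂ) with hldef
  set Cl : ℕ → Matrix (Fin n) (Fin n) ℂ := fun k => C k + l • (W k * A k) with hCl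
  set Dl : ℕ → Matrix (Fin n) (Fin n) ℂ := fun k => D k + l • (W k * B k) with hDl
  have hSleq : ∀ k, S k + l • Vmat S W k
      = Matrix.fromBlocks (A k) (B k) (Cl k) (Dl k) := fun k =>
    s18_slBlocks S A B C D W k (hblocks k) l
  have hSsymp : ∀ k, (Matrix.fromBlocks (A k) (B k) (C k) (D k))ᴴ * Jmat n *
      Matrix.fromBlocks (A k) (B k) (C k) (D k) = Jmat n := fun k => by
    rw [← hblocks k]; exact hS k
  have hSlsymp : ∀ k, (Matrix.fromBlocks (A k) (B k) (Cl k) (Dl k))ᴴ * Jmat n *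
      Matrix.fromBlocks (A k) (B k) (Cl k) (Dl k) = Jmat n := fun k =>
    s18_symp_lifted (hSsymp k) (hWh k) hl
  -- left inverse of the symplectic block matrix
  have hTS : ∀ k, Matrix.fromBlocks ((Dl k)ᴴ) (-(B k)ᴴ) (-(Cl k)ᴴ) ((A k)ᴴ) *
      Matrix.fromBlocks (A k) (B k) (Cl k) (Dl k) = 1 := by
    intro k
    obtain ⟨e1, e2, e3, e4⟩ := s18_symp_base (hSlsymp k)
    rw [Matrix.fromBlocks_multiply, ← Matrix.fromBlocks_one]
    have g1 : (Dl k)ᴴ * A k + -(B k)ᴴ * Cl k = 1 := by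
      have h := congrArg Matrix.conjTranspose e2
      simp only [Matrix.conjTranspose_add, Matrix.conjTranspose_neg, Matrix.conjTranspose_mul,
        Matrix.conjTranspose_one, Matrix.conjTranspose_conjTranspose] at h
      rw [← h]
      simp only [Matrix.neg_mul]
      abel
    have g2 : (Dl k)ᴴ * B k + -(B k)ᴴ * Dl k = 0 := by
      have h := congrArg Matrix.conjTranspose e4
      simp only [Matrix.conjTranspose_add, Matrix.conjTranspose_neg, Matrix.conjTranspose_mul,
        Matrix.conjTranspose_zero, Matrix.conjTranspose_conjTranspose] at h
      rw [← h]
      simp only [Matrix.neg_mul]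
      abel
    have g3 : -(Cl k)ᴴ * A k + (A k)ᴴ * Cl k = 0 := by
      simp only [Matrix.neg_mul]
      exact e1
    have g4 : -(Cl k)ᴴ * B k + (A k)ᴴ * Dl k = 1 := by
      simp only [Matrix.neg_mul]
      exact e2
    rw [g1, g2, g3, g4]
  have hST : ∀ k, Matrix.fromBlocks (A k) (B k) (Cl k) (Dl k) *
      Matrix.fromBlocks ((Dl k)ᴴ) (-(B k)ᴴ) (-(Cl k)ᴴ) ((A k)ᴴ) = 1 := fun k =>
    mul_eq_one_comm.mp (hTS k)
  have hAB : ∀ k, A k * (B k)ᴴ = B k * (A k)ᴴ := by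
    intro k
    have h := hST k
    rw [Matrix.fromBlocks_multiply, ← Matrix.fromBlocks_one, Matrix.fromBlocks_inj] at h
    have h2 := h.2.1
    rw [← sub_eq_zero, ← neg_eq_zero, ← h2]
    simp only [Matrix.mul_neg]
    abel
  -- recursions
  have hrec : ∀ k, Matrix.fromRows (Xt k) (Ut k) =
      Matrix.fromBlocks (A k) (B k) (Cl k) (Dl k) * Matrix.fromRows (Xt (k+1)) (Ut (k+1)) := by
    intro k
    rw [← hSleq k]
    exact hsol k
  have hXrec : ∀ k, Xt k = A k * Xt (k+1) + B k * Ut (k+1) := by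
    intro k
    have h := hrec k
    rw [Matrix.fromBlocks_mul_fromRows, Matrix.fromRows_ext_iff] at h
    exact h.1
  have hUrec : ∀ k, Ut k = Cl k * Xt (k+1) + Dl k * Ut (k+1) := by
    intro k
    have h := hrec k
    rw [Matrix.fromBlocks_mul_fromRows, Matrix.fromRows_ext_iff] at h
    exact h.2
  have hXrev : ∀ k, Xt (k+1) = (Dl k)ᴴ * Xt k - (B k)ᴴ * Ut k := by
    intro k
    have h : Matrix.fromRows (Xt (k+1)) (Ut (k+1)) =
        Matrix.fromBlocks ((Dl k)ᴴ) (-(B k)ᴴ) (-(Cl k)ᴴ) ((A k)ᴴ) *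
          Matrix.fromRows (Xt k) (Ut k) := by
      rw [hrec k, ← Matrix.mul_assoc, hTS k, Matrix.one_mul]
    rw [Matrix.fromBlocks_mul_fromRows, Matrix.fromRows_ext_iff] at h
    rw [h.1]
    simp only [Matrix.neg_mul]
    abel
  have hXU : ∀ k, (Xt k)ᴴ * Ut k = (Ut k)ᴴ * Xt k := by
    intro k
    have h := (hcb2 k).2
    rw [Matrix.conjTranspose_fromRows_eq_fromCols_conjTranspose, Jmat, Matrix.mul_assoc,
      Matrix.fromBlocks_mul_fromRows, Matrix.fromCols_mul_fromRows] at h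
    simp only [Matrix.zero_mul, Matrix.one_mul, Matrix.neg_mul, Matrix.mul_neg,
      zero_add, add_zero, neg_one_mul] at h
    rw [← sub_eq_zero]
    rw [← h]
    abel
  -- the Hermitian increments
  have hQ : ∀ k, ((Xt k)⁻¹ * B k * ((Xt (k+1))ᴴ)⁻¹)ᴴ = (Xt k)⁻¹ * B k * ((Xt (k+1))ᴴ)⁻¹ :=
    fun k => s18_qHerm (hXrec k) (hAB k) (hXU (k+1)) (hd k) (hd (k+1))
  have hLamH : ∀ k, (LamMat B Xt k)ᴴ = LamMat B Xt k := by
    intro k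
    rw [LamMat, Matrix.conjTranspose_sum]
    exact Finset.sum_congr rfl fun i _ => by rw [Matrix.conjTranspose_neg, hQ i]
  have hLamRec : ∀ k, LamMat B Xt k =
      LamMat B Xt (k+1) + (Xt k)⁻¹ * B k * ((Xt (k+1))ᴴ)⁻¹ := by
    intro k
    rw [LamMat, LamMat, Finset.sum_range_succ]
    abel
  have hUXinv : ∀ k, Ut k * (Xt k)⁻¹ = ((Xt k)ᴴ)⁻¹ * (Ut k)ᴴ := fun k =>
    s18_ux (hXU k) (hd k)
  have hdh : ∀ k, IsUnit ((Xt k)ᴴ).det := fun k => by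
    rw [Matrix.det_conjTranspose]; exact (hd k).star
  -- the hat solution satisfies the recursion
  have hXhatRec : ∀ k, Xhat B Xt k = A k * Xhat B Xt (k+1) + B k * Uhat B Xt Ut (k+1) := by
    intro k
    rw [Xhat, Xhat, Uhat, hLamRec k, Matrix.mul_add,
      show Xt k * ((Xt k)⁻¹ * B k * ((Xt (k+1))ᴴ)⁻¹)
        = Xt k * ((Xt k)⁻¹ * (B k * ((Xt (k+1))ᴴ)⁻¹)) from by noncomm_ring,
      Matrix.mul_nonsing_inv_cancel_left _ _ (hd k), hXrec k]
    noncomm_ring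
  have hUhatRec : ∀ k, Uhat B Xt Ut k =
      Cl k * Xhat B Xt (k+1) + Dl k * Uhat B Xt Ut (k+1) := by
    intro k
    have hX1h : (Xt (k+1))ᴴ = (Xt k)ᴴ * Dl k - (Ut k)ᴴ * B k := by
      rw [hXrev k]
      simp only [Matrix.conjTranspose_sub, Matrix.conjTranspose_mul,
        Matrix.conjTranspose_conjTranspose]
    have hdl : Dl k * ((Xt (k+1))ᴴ)⁻¹ = ((Xt k)ᴴ)⁻¹
        + ((Xt k)ᴴ)⁻¹ * ((Ut k)ᴴ * (B k * ((Xt (k+1))ᴴ)⁻¹)) := by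
      have step : (Xt k)ᴴ * (Dl k * ((Xt (k+1))ᴴ)⁻¹) = (Xt k)ᴴ *
          (((Xt k)ᴴ)⁻¹ + ((Xt k)ᴴ)⁻¹ * ((Ut k)ᴴ * (B k * ((Xt (k+1))ᴴ)⁻¹))) := by
        rw [Matrix.mul_add, Matrix.mul_nonsing_inv _ (hdh k),
          Matrix.mul_nonsing_inv_cancel_left _ _ (hdh k), ← Matrix.mul_assoc,
          show (Xt k)ᴴ * Dl k = (Xt (k+1))ᴴ + (Ut k)ᴴ * B k from by rw [hX1h]; abel,
          Matrix.add_mul, Matrix.mul_nonsing_inv _ (hdh (k+1)), Matrix.mul_assoc]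
      have h2 := congrArg (fun M => ((Xt k)ᴴ)⁻¹ * M) step
      simpa only [Matrix.nonsing_inv_mul_cancel_left _ _ (hdh k)] using h2
    calc Uhat B Xt Ut k
        = Ut k * LamMat B Xt (k+1)
          + (Ut k * (Xt k)⁻¹) * (B k * ((Xt (k+1))ᴴ)⁻¹) + ((Xt k)ᴴ)⁻¹ := by
          rw [Uhat, hLamRec k]; noncomm_ring
      _ = Ut k * LamMat B Xt (k+1)
          + (((Xt k)ᴴ)⁻¹ + ((Xt k)ᴴ)⁻¹ * ((Ut k)ᴴ * (B k * ((Xt (k+1))ᴴ)⁻¹))) := by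
          rw [hUXinv k]; noncomm_ring
      _ = Ut k * LamMat B Xt (k+1) + Dl k * ((Xt (k+1))ᴴ)⁻¹ := by rw [hdl]
      _ = Cl k * Xhat B Xt (k+1) + Dl k * Uhat B Xt Ut (k+1) := by
          rw [hUrec k, Xhat, Uhat]; noncomm_ring
  have hZhatRec : ∀ k, Matrix.fromRows (Xhat B Xt k) (Uhat B Xt Ut k) =
      Matrix.fromBlocks (A k) (B k) (Cl k) (Dl k) *
        Matrix.fromRows (Xhat B Xt (k+1)) (Uhat B Xt Ut (k+1)) := by
    intro k
    rw [Matrix.fromBlocks_mul_fromRows, Matrix.fromRows_ext_iff]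
    exact ⟨hXhatRec k, hUhatRec k⟩
  -- Z^{(m)} is a solution
  have hZmRec : ∀ k, Zsolm B Xt Ut m k =
      (S k + l • Vmat S W k) * Zsolm B Xt Ut m (k+1) := by
    intro k
    rw [hSleq k, Zsolm, Zsolm, hrec k, hZhatRec k, Matrix.mul_sub, Matrix.mul_assoc]
  -- invertibility facts at m
  have hdLam : IsUnit (LamMat B Xt m).det := (Matrix.isUnit_iff_isUnit_det _).1 hm
  have hdXhat : IsUnit (Xhat B Xt m).det := by
    rw [Xhat, Matrix.det_mul]; exact (hd m).mul hdLam
  have hinvXhat : (Xhat B Xt m)⁻¹ * Xt m = (LamMat B Xt m)⁻¹ := by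
    rw [Xhat, Matrix.mul_inv_rev, Matrix.mul_assoc, Matrix.nonsing_inv_mul _ (hd m),
      Matrix.mul_one]
  have hXhatHinv : ((Xhat B Xt m)ᴴ)⁻¹ = ((Xt m)ᴴ)⁻¹ * (LamMat B Xt m)⁻¹ := by
    rw [Xhat, Matrix.conjTranspose_mul, Matrix.mul_inv_rev, hLamH m]
  -- Part 1
  have part1 : Zsolm B Xt Ut m m = Matrix.fromRows 0 (-(((Xhat B Xt m)ᴴ)⁻¹)) := by
    rw [Zsolm, hinvXhat, Matrix.fromRows_mul, s18_fromRows_sub, Matrix.fromRows_ext_iff]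
    constructor
    · rw [Xhat, Matrix.mul_assoc, Matrix.mul_nonsing_inv _ hdLam, Matrix.mul_one, sub_self]
    · rw [Uhat, hXhatHinv, Matrix.add_mul, Matrix.mul_assoc,
        Matrix.mul_nonsing_inv _ hdLam, Matrix.mul_one]
      abel
  refine ⟨part1, ?_⟩
  -- Part 2
  have hWdm : IsUnit (W m).det := (Matrix.isUnit_iff_isUnit_det _).1 (hW m).isUnit
  intro k
  rcases lt_trichotomy k m with hk | hk | hk
  · -- k < m
    have hzk : z k = Zsolm B Xt Ut m k *ᵥ Pi.single j 1 := by
      rw [hzdef k, if_pos (le_of_lt hk)]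
    have hzk1 : z (k+1) = Zsolm B Xt Ut m (k+1) *ᵥ Pi.single j 1 := by
      rw [hzdef (k+1), if_pos (Nat.succ_le_of_lt hk)]
    have hfk : f k = 0 := by rw [hfdef k, if_neg (Nat.ne_of_lt hk)]
    have hzstep : z k = (S k + l • Vmat S W k) *ᵥ z (k+1) := by
      rw [hzk, hzk1, Matrix.mulVec_mulVec, ← hZmRec k]
    have h1 : z k - S k *ᵥ z (k+1) = (l • Vmat S W k) *ᵥ z (k+1) := by
      rw [hzstep, Matrix.add_mulVec, add_sub_cancel_left]
    have hPsiSl : PsiMat W k * (S k + l • Vmat S W k) = PsiMat W k * S k := by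
      rw [Matrix.mul_add, Matrix.mul_smul, s18_PsiV, smul_zero, add_zero]
    calc Jmat n *ᵥ (z k - S k *ᵥ z (k+1))
        = (l • (Jmat n * Vmat S W k)) *ᵥ z (k+1) := by
          rw [h1, Matrix.mulVec_mulVec, Matrix.mul_smul]
      _ = l • ((PsiMat W k * S k) *ᵥ z (k+1)) := by
          rw [s18_JV, Matrix.smul_mulVec]
      _ = PsiMat W k *ᵥ (l • z k + f k) := by
          rw [hfk, add_zero, Matrix.mulVec_smul, hzstep, Matrix.mulVec_mulVec, hPsiSl]
  · -- k = m
    subst hk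
    have hzk : z k = Sum.elim (0 : Fin n → ℂ) (-(((Xhat B Xt k)ᴴ)⁻¹ *ᵥ Pi.single j 1)) := by
      rw [hzdef k, if_pos (le_refl k), part1, Matrix.fromRows_mulVec, Matrix.zero_mulVec,
        Matrix.neg_mulVec]
    have hzk1 : z (k+1) = 0 := by
      rw [hzdef (k+1), if_neg (by omega)]
    have hfk : f k = Sum.elim (-((W k)⁻¹ *ᵥ (((Xhat B Xt k)ᴴ)⁻¹ *ᵥ Pi.single j 1))) 0 := by
      rw [hfdef k, if_pos rfl]
    have hsum : ∀ a b c d : Fin n → ℂ,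
        l • (Sum.elim a b : Fin n ⊕ Fin n → ℂ) + Sum.elim c d
          = Sum.elim (l • a + c) (l • b + d) := by
      intro a b c d
      funext i
      rcases i with i | i <;> simp
    rw [hzk1, Matrix.mulVec_zero, sub_zero, hzk, hfk, hsum, s18_j_mulVec, s18_psi_mulVec]
    simp only [Sum.elim_comp_inl, Sum.elim_comp_inr, smul_zero, zero_add, add_zero,
      neg_zero, Matrix.mulVec_neg, Matrix.mulVec_mulVec,
      Matrix.mul_nonsing_inv _ hWdm, Matrix.one_mulVec]
    rw [← Matrix.mul_assoc, Matrix.mul_nonsing_inv _ hWdm, Matrix.one_mul]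
  · -- m < k
    have hzk : z k = 0 := by rw [hzdef k, if_neg (by omega)]
    have hzk1 : z (k+1) = 0 := by rw [hzdef (k+1), if_neg (by omega)]
    have hfk : f k = 0 := by rw [hfdef k, if_neg (by omega)]
    rw [hzk, hzk1, hfk, Matrix.mulVec_zero, sub_zero, Matrix.mulVec_zero, smul_zero,
      add_zero, Matrix.mulVec_zero]
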